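/- In a restriction category with restriction coproducts and a restriction zero, a morphism h : A → A + A is the decision of f : A → B + C if and only if ∇ ∘ h = f̄ and (f + f) ∘ h = (i + j) ∘ f, where i, j : B+C → (B+C)+(B+C) are composed appropriately, i.e. the square with h and the injections commutes. -/

import Mathlib

open CategoryTheory CategoryTheory.Limits

universe v u

/-- A restriction category: a category with an operation assigning to each
morphism `f : A ⟶ B` a morphism `ρ f : A ⟶ A` satisfying axioms R.1–R.4.
(Composition is written diagrammatically: `f ≫ g` is "first `f`, then `g`",
so the paper's `g ∘ f` is `f ≫ g`.) -/
class RestrictionCategory (C : Type u) [Category.{v} C] where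
  ρ : ∀ {A B : C}, (A ⟶ B) → (A ⟶ A)
  R1 : ∀ {A B : C} (f : A ⟶ B), ρ f ≫ f = f
  R2 : ∀ {A B D : C} (f : A ⟶ B) (g : A ⟶ D), ρ f ≫ ρ g = ρ g ≫ ρ f
  R3 : ∀ {A B D : C} (f : A ⟶ B) (g : A ⟶ D), ρ (ρ f ≫ g) = ρ f ≫ ρ g
  R4 : ∀ {A B D : C} (f : A ⟶ B) (g : B ⟶ D), f ≫ ρ g = ρ (f ≫ g) ≫ f

open RestrictionCategory

open ZeroObject

variable {C : Type u} [Category.{v} C] [RestrictionCategory C]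
  [HasBinaryCoproducts C] [HasZeroObject C] [HasZeroMorphisms C]


section AuxLemmas

variable {C : Type u} [Category.{v} C] [RestrictionCategory C]

open RestrictionCategory

lemma rho_one (A : C) : ρ (𝟙 A) = 𝟙 A := by
  have := R1 (𝟙 A); simpa using this

lemma rho_rho {A B : C} (f : A ⟶ B) : ρ (ρ f) = ρ f := by
  have := R3 f (𝟙 A); simpa [rho_one] using this

lemma rho_comp_left {A B X : C} (f : A ⟶ B) (g : B ⟶ X) :
    ρ f ≫ ρ (f ≫ g) = ρ (f ≫ g) := by
  have h1 : ρ f ≫ (f ≫ g) = f ≫ g := by rw [← Category.assoc, R1]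
  have := R3 f (f ≫ g)
  rw [h1] at this
  exact this.symm

lemma rho_comp_right {A B X : C} (f : A ⟶ B) (g : B ⟶ X) :
    ρ (f ≫ g) ≫ ρ f = ρ (f ≫ g) := by
  rw [← R2, rho_comp_left]

lemma rho_comp_rho {A B X : C} (f : A ⟶ B) (g : B ⟶ X) :
    ρ (f ≫ ρ g) = ρ (f ≫ g) := by
  rw [R4, R3, rho_comp_right]

lemma rho_desc [HasBinaryCoproducts C] {X Y Z : C} (p : X ⟶ Z) (q : Y ⟶ Z) :
    ρ (coprod.desc p q) = coprod.map (ρ p) (ρ q) := by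
  apply coprod.hom_ext
  · rw [R4, coprod.inl_desc, coprod.inl_map]
  · rw [R4, coprod.inr_desc, coprod.inr_map]

lemma rho_zero' [HasZeroMorphisms C]
    (hzero : ∀ A : C, ρ (0 : A ⟶ A) = (0 : A ⟶ A)) (A X : C) :
    ρ (0 : A ⟶ X) = 0 := by
  have h1 : (0 : A ⟶ X) = (0 : A ⟶ A) ≫ (0 : A ⟶ X) := by simp
  calc ρ (0 : A ⟶ X) = ρ ((0 : A ⟶ A) ≫ (0 : A ⟶ X)) := by rw [← h1]
    _ = ρ ((0 : A ⟶ A) ≫ ρ (0 : A ⟶ X)) := (rho_comp_rho _ _).symm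
    _ = ρ (0 : A ⟶ A) := by rw [zero_comp]
    _ = 0 := hzero A

lemma map_eq_desc [HasBinaryCoproducts C] {X Y X' Y' : C} (g : X ⟶ X') (k : Y ⟶ Y') :
    coprod.map g k = coprod.desc (g ≫ coprod.inl) (k ≫ coprod.inr) := by
  apply coprod.hom_ext <;> simp

end AuxLemmas

/-- The restriction retraction `⟨1|0⟩ : A ⨿ B ⟶ A` of the first injection. -/
noncomputable def iStar (A B : C) : (A ⨿ B) ⟶ A := coprod.desc (𝟙 A) 0

/-- The restriction retraction `⟨0|1⟩ : A ⨿ B ⟶ B` of the second injection. -/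
noncomputable def jStar (A B : C) : (A ⨿ B) ⟶ B := coprod.desc 0 (𝟙 B)

/-- `h : A ⟶ A ⨿ A` is a decision for `f : A ⟶ B ⨿ D` if it is restriction
inverse to `⟨overline{i* f} | overline{j* f}⟩ : A ⨿ A ⟶ A` and `ρ h = ρ f`. -/
def IsDecision {A B D : C} (f : A ⟶ B ⨿ D) (h : A ⟶ A ⨿ A) : Prop :=
  coprod.desc (ρ (f ≫ iStar B D)) (ρ (f ≫ jStar B D)) ≫ h =
    ρ (coprod.desc (ρ (f ≫ iStar B D)) (ρ (f ≫ jStar B D))) ∧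
  h ≫ coprod.desc (ρ (f ≫ iStar B D)) (ρ (f ≫ jStar B D)) = ρ h ∧
  ρ h = ρ f

/-- Characterization of decisions: in a restriction category with restriction
coproducts (total injections) and restriction zero, `h : A ⟶ A ⨿ A` is the
decision of `f : A ⟶ B ⨿ D` if and only if `∇ ∘ h = ρ f` and
`(f + f) ∘ h = (i + j) ∘ f`. -/
theorem stmt_10
    (htot : ∀ A B : C, ρ (coprod.inl : A ⟶ A ⨿ B) = 𝟙 A ∧
      ρ (coprod.inr : B ⟶ A ⨿ B) = 𝟙 B)
    (hzero : ∀ A : C, ρ (0 : A ⟶ A) = (0 : A ⟶ A))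
    {A B D : C} (f : A ⟶ B ⨿ D) (h : A ⟶ A ⨿ A) :
    IsDecision f h ↔
      (h ≫ coprod.desc (𝟙 A) (𝟙 A) = ρ f ∧
       h ≫ coprod.map f f =
         f ≫ coprod.map (coprod.inl : B ⟶ B ⨿ D) (coprod.inr : D ⟶ B ⨿ D)) := by
  have rz : ∀ X Y : C, ρ (0 : X ⟶ Y) = 0 := fun X Y => rho_zero' hzero X Y
  set a : A ⟶ A := ρ (f ≫ iStar B D) with ha
  set b : A ⟶ A := ρ (f ≫ jStar B D) with hb
  set T : (B ⨿ D) ⟶ (B ⨿ D) ⨿ (B ⨿ D) :=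
    coprod.map (coprod.inl : B ⟶ B ⨿ D) (coprod.inr : D ⟶ B ⨿ D) with hT
  have rD : ρ (coprod.desc a b) = coprod.map a b := by
    rw [rho_desc, ha, hb, rho_rho, rho_rho]
  have haf : a ≫ ρ f = a := by rw [ha, ← R2, rho_comp_left]
  have hbf : b ≫ ρ f = b := by rw [hb, ← R2, rho_comp_left]
  have rIStar : ρ (iStar B D) = coprod.map (𝟙 B) (0 : D ⟶ D) := by
    rw [iStar, rho_desc, rho_one, rz]
  have rJStar : ρ (jStar B D) = coprod.map (0 : B ⟶ B) (𝟙 D) := by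
    rw [jStar, rho_desc, rho_one, rz]
  have hafm : a ≫ f = f ≫ coprod.map (𝟙 B) (0 : D ⟶ D) := by
    rw [← rIStar, ← R4]
  have hbfm : b ≫ f = f ≫ coprod.map (0 : B ⟶ B) (𝟙 D) := by
    rw [← rJStar, ← R4]
  have hmabD : coprod.map a b ≫ coprod.desc (𝟙 A) (𝟙 A) = coprod.desc a b := by
    apply coprod.hom_ext <;> simp
  constructor
  · rintro ⟨hD1, hD2, hD3⟩
    have hmab : h ≫ coprod.map a b = h := by
      rw [← rD, ← hD1, ← Category.assoc, hD2, R1]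
    have hE1 : h ≫ coprod.desc (𝟙 A) (𝟙 A) = ρ f := by
      calc h ≫ coprod.desc (𝟙 A) (𝟙 A)
          = h ≫ coprod.map a b ≫ coprod.desc (𝟙 A) (𝟙 A) := by
            rw [← Category.assoc, hmab]
        _ = h ≫ coprod.desc a b := by rw [hmabD]
        _ = ρ h := hD2
        _ = ρ f := hD3
    refine ⟨hE1, ?_⟩
    have hstep : coprod.map (a ≫ f) (b ≫ f) = coprod.desc a b ≫ f ≫ T := by
      apply coprod.hom_ext
      · rw [coprod.inl_map, coprod.inl_desc_assoc]
        have hm1T : coprod.map (𝟙 B) (0 : D ⟶ D) ≫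
            (coprod.inl : (B ⨿ D) ⟶ (B ⨿ D) ⨿ (B ⨿ D)) =
            coprod.map (𝟙 B) (0 : D ⟶ D) ≫ T := by
          apply coprod.hom_ext <;> simp [hT]
        calc (a ≫ f) ≫ coprod.inl
            = f ≫ coprod.map (𝟙 B) (0 : D ⟶ D) ≫ coprod.inl := by
              rw [hafm, Category.assoc]
          _ = f ≫ coprod.map (𝟙 B) (0 : D ⟶ D) ≫ T := by rw [hm1T]
          _ = (a ≫ f) ≫ T := by rw [← Category.assoc, ← hafm]
          _ = a ≫ f ≫ T := by rw [Category.assoc]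
      · rw [coprod.inr_map, coprod.inr_desc_assoc]
        have hm2T : coprod.map (0 : B ⟶ B) (𝟙 D) ≫
            (coprod.inr : (B ⨿ D) ⟶ (B ⨿ D) ⨿ (B ⨿ D)) =
            coprod.map (0 : B ⟶ B) (𝟙 D) ≫ T := by
          apply coprod.hom_ext <;> simp [hT]
        calc (b ≫ f) ≫ coprod.inr
            = f ≫ coprod.map (0 : B ⟶ B) (𝟙 D) ≫ coprod.inr := by
              rw [hbfm, Category.assoc]
          _ = f ≫ coprod.map (0 : B ⟶ B) (𝟙 D) ≫ T := by rw [hm2T]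
          _ = (b ≫ f) ≫ T := by rw [← Category.assoc, ← hbfm]
          _ = b ≫ f ≫ T := by rw [Category.assoc]
    calc h ≫ coprod.map f f
        = h ≫ coprod.map a b ≫ coprod.map f f := by rw [← Category.assoc, hmab]
      _ = h ≫ coprod.map (a ≫ f) (b ≫ f) := by rw [coprod.map_map]
      _ = h ≫ coprod.desc a b ≫ f ≫ T := by rw [hstep]
      _ = (h ≫ coprod.desc a b) ≫ f ≫ T := by rw [Category.assoc]
      _ = ρ h ≫ f ≫ T := by rw [hD2]
      _ = ρ f ≫ f ≫ T := by rw [hD3]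
      _ = (ρ f ≫ f) ≫ T := by rw [Category.assoc]
      _ = f ≫ T := by rw [R1]
  · rintro ⟨hE1, hE2⟩
    have rNabla : ρ (coprod.desc (𝟙 A) (𝟙 A)) = 𝟙 (A ⨿ A) := by
      rw [rho_desc, rho_one]; simp
    have hD3 : ρ h = ρ f := by
      have h1 : ρ (h ≫ coprod.desc (𝟙 A) (𝟙 A)) = ρ h := by
        rw [← rho_comp_rho, rNabla, Category.comp_id]
      rw [hE1] at h1
      rw [← h1, rho_rho]
    -- (F) : h ≫ map (f ≫ i*) (f ≫ j*) = f
    have hF : h ≫ coprod.map (f ≫ iStar B D) (f ≫ jStar B D) = f := by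
      have e2 : T ≫ coprod.map (iStar B D) (jStar B D) = 𝟙 (B ⨿ D) := by
        apply coprod.hom_ext <;> simp [hT, iStar, jStar, coprod.inl_desc, coprod.inr_desc]
      calc h ≫ coprod.map (f ≫ iStar B D) (f ≫ jStar B D)
          = h ≫ coprod.map f f ≫ coprod.map (iStar B D) (jStar B D) := by
            rw [coprod.map_map]
        _ = (h ≫ coprod.map f f) ≫ coprod.map (iStar B D) (jStar B D) := by
            rw [Category.assoc]
        _ = (f ≫ T) ≫ coprod.map (iStar B D) (jStar B D) := by rw [hE2]
        _ = f ≫ T ≫ coprod.map (iStar B D) (jStar B D) := by rw [Category.assoc]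
        _ = f := by rw [e2, Category.comp_id]
    have rcompinl : ∀ {X Y Z : C} (g : X ⟶ Y),
        ρ (g ≫ (coprod.inl : Y ⟶ Y ⨿ Z)) = ρ g := by
      intro X Y Z g
      rw [← rho_comp_rho, (htot Y Z).1, Category.comp_id]
    have rcompinr : ∀ {X Y Z : C} (g : X ⟶ Z),
        ρ (g ≫ (coprod.inr : Z ⟶ Y ⨿ Z)) = ρ g := by
      intro X Y Z g
      rw [← rho_comp_rho, (htot Y Z).2, Category.comp_id]
    have rM : ρ (coprod.map (f ≫ iStar B D) (f ≫ jStar B D)) = coprod.map a b := by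
      rw [map_eq_desc, rho_desc, rcompinl, rcompinr, ha, hb]
    have hmab : h ≫ coprod.map a b = h := by
      calc h ≫ coprod.map a b
          = h ≫ ρ (coprod.map (f ≫ iStar B D) (f ≫ jStar B D)) := by rw [rM]
        _ = ρ (h ≫ coprod.map (f ≫ iStar B D) (f ≫ jStar B D)) ≫ h := R4 _ _
        _ = ρ f ≫ h := by rw [hF]
        _ = ρ h ≫ h := by rw [hD3]
        _ = h := R1 h
    have hD2 : h ≫ coprod.desc a b = ρ h := by
      calc h ≫ coprod.desc a b
          = h ≫ coprod.map a b ≫ coprod.desc (𝟙 A) (𝟙 A) := by rw [hmabD]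
        _ = (h ≫ coprod.map a b) ≫ coprod.desc (𝟙 A) (𝟙 A) := by rw [Category.assoc]
        _ = h ≫ coprod.desc (𝟙 A) (𝟙 A) := by rw [hmab]
        _ = ρ f := hE1
        _ = ρ h := hD3.symm
    refine ⟨?_, hD2, hD3⟩
    -- D ≫ h = ρ D
    rw [rD]
    -- G1 and G2
    have hG1 : h ≫ coprod.desc (f ≫ iStar B D) (0 : A ⟶ B) = f ≫ iStar B D := by
      have e3 : coprod.map f f ≫ coprod.desc (iStar B D) (0 : (B ⨿ D) ⟶ B) =
          coprod.desc (f ≫ iStar B D) (0 : A ⟶ B) := by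
        apply coprod.hom_ext <;> simp
      have e4 : T ≫ coprod.desc (iStar B D) (0 : (B ⨿ D) ⟶ B) = iStar B D := by
        apply coprod.hom_ext <;> simp [hT, iStar, coprod.inl_desc, coprod.inr_desc]
      calc h ≫ coprod.desc (f ≫ iStar B D) (0 : A ⟶ B)
          = h ≫ coprod.map f f ≫ coprod.desc (iStar B D) (0 : (B ⨿ D) ⟶ B) := by
            rw [e3]
        _ = (h ≫ coprod.map f f) ≫ coprod.desc (iStar B D) (0 : (B ⨿ D) ⟶ B) := by
            rw [Category.assoc]
        _ = (f ≫ T) ≫ coprod.desc (iStar B D) (0 : (B ⨿ D) ⟶ B) := by rw [hE2]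
        _ = f ≫ T ≫ coprod.desc (iStar B D) (0 : (B ⨿ D) ⟶ B) := by rw [Category.assoc]
        _ = f ≫ iStar B D := by rw [e4]
    have hG2 : h ≫ coprod.desc (0 : A ⟶ D) (f ≫ jStar B D) = f ≫ jStar B D := by
      have e3 : coprod.map f f ≫ coprod.desc (0 : (B ⨿ D) ⟶ D) (jStar B D) =
          coprod.desc (0 : A ⟶ D) (f ≫ jStar B D) := by
        apply coprod.hom_ext <;> simp
      have e4 : T ≫ coprod.desc (0 : (B ⨿ D) ⟶ D) (jStar B D) = jStar B D := by
        apply coprod.hom_ext <;> simp [hT, jStar, coprod.inl_desc, coprod.inr_desc]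
      calc h ≫ coprod.desc (0 : A ⟶ D) (f ≫ jStar B D)
          = h ≫ coprod.map f f ≫ coprod.desc (0 : (B ⨿ D) ⟶ D) (jStar B D) := by
            rw [e3]
        _ = (h ≫ coprod.map f f) ≫ coprod.desc (0 : (B ⨿ D) ⟶ D) (jStar B D) := by
            rw [Category.assoc]
        _ = (f ≫ T) ≫ coprod.desc (0 : (B ⨿ D) ⟶ D) (jStar B D) := by rw [hE2]
        _ = f ≫ T ≫ coprod.desc (0 : (B ⨿ D) ⟶ D) (jStar B D) := by rw [Category.assoc]
        _ = f ≫ jStar B D := by rw [e4]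
    have aH : a ≫ h = h ≫ coprod.map a (0 : A ⟶ A) := by
      have r1 : ρ (coprod.desc (f ≫ iStar B D) (0 : A ⟶ B)) =
          coprod.map a (0 : A ⟶ A) := by
        rw [rho_desc, ha, rz]
      calc a ≫ h = ρ (h ≫ coprod.desc (f ≫ iStar B D) (0 : A ⟶ B)) ≫ h := by
            rw [hG1, ha]
        _ = h ≫ ρ (coprod.desc (f ≫ iStar B D) (0 : A ⟶ B)) := (R4 _ _).symm
        _ = h ≫ coprod.map a (0 : A ⟶ A) := by rw [r1]
    have bH : b ≫ h = h ≫ coprod.map (0 : A ⟶ A) b := by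
      have r1 : ρ (coprod.desc (0 : A ⟶ D) (f ≫ jStar B D)) =
          coprod.map (0 : A ⟶ A) b := by
        rw [rho_desc, hb, rz]
      calc b ≫ h = ρ (h ≫ coprod.desc (0 : A ⟶ D) (f ≫ jStar B D)) ≫ h := by
            rw [hG2, hb]
        _ = h ≫ ρ (coprod.desc (0 : A ⟶ D) (f ≫ jStar B D)) := (R4 _ _).symm
        _ = h ≫ coprod.map (0 : A ⟶ A) b := by rw [r1]
    apply coprod.hom_ext
    · simp only [coprod.inl_desc_assoc, coprod.inl_map]
      have key : coprod.map a (0 : A ⟶ A) ≫ coprod.desc (𝟙 A) (𝟙 A) ≫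
          (coprod.inl : A ⟶ A ⨿ A) = coprod.map a (0 : A ⟶ A) := by
        apply coprod.hom_ext <;> simp [coprod.inl_desc, coprod.inr_desc]
      calc a ≫ h = h ≫ coprod.map a (0 : A ⟶ A) := aH
        _ = h ≫ coprod.map a (0 : A ⟶ A) ≫ coprod.desc (𝟙 A) (𝟙 A) ≫
            (coprod.inl : A ⟶ A ⨿ A) := by rw [key]
        _ = ((h ≫ coprod.map a (0 : A ⟶ A)) ≫ coprod.desc (𝟙 A) (𝟙 A)) ≫
            (coprod.inl : A ⟶ A ⨿ A) := by simp only [Category.assoc]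
        _ = ((a ≫ h) ≫ coprod.desc (𝟙 A) (𝟙 A)) ≫ (coprod.inl : A ⟶ A ⨿ A) := by
            rw [← aH]
        _ = (a ≫ (h ≫ coprod.desc (𝟙 A) (𝟙 A))) ≫ (coprod.inl : A ⟶ A ⨿ A) := by
            simp only [Category.assoc]
        _ = (a ≫ ρ f) ≫ (coprod.inl : A ⟶ A ⨿ A) := by rw [hE1]
        _ = a ≫ coprod.inl := by rw [haf]
    · simp only [coprod.inr_desc_assoc, coprod.inr_map]
      have key : coprod.map (0 : A ⟶ A) b ≫ coprod.desc (𝟙 A) (𝟙 A) ≫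
          (coprod.inr : A ⟶ A ⨿ A) = coprod.map (0 : A ⟶ A) b := by
        apply coprod.hom_ext <;> simp [coprod.inl_desc, coprod.inr_desc]
      calc b ≫ h = h ≫ coprod.map (0 : A ⟶ A) b := bH
        _ = h ≫ coprod.map (0 : A ⟶ A) b ≫ coprod.desc (𝟙 A) (𝟙 A) ≫
            (coprod.inr : A ⟶ A ⨿ A) := by rw [key]
        _ = ((h ≫ coprod.map (0 : A ⟶ A) b) ≫ coprod.desc (𝟙 A) (𝟙 A)) ≫
            (coprod.inr : A ⟶ A ⨿ A) := by simp only [Category.assoc]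
        _ = ((b ≫ h) ≫ coprod.desc (𝟙 A) (𝟙 A)) ≫ (coprod.inr : A ⟶ A ⨿ A) := by
            rw [← bH]
        _ = (b ≫ (h ≫ coprod.desc (𝟙 A) (𝟙 A))) ≫ (coprod.inr : A ⟶ A ⨿ A) := by
            simp only [Category.assoc]
        _ = (b ≫ ρ f) ≫ (coprod.inr : A ⟶ A ⨿ A) := by rw [hE1]
        _ = b ≫ coprod.inr := by rw [hbf]
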